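/- There exists a constant C > 0 such that for every γ ∈ (0,1), the product probability measure of the set of ξ ∈ [−1/2,1/2]^ℤ for which the frequency ω(ξ) := (j² + ξ_j)_{j∈ℤ} is NOT γ-Diophantine is at most Cγ. Here ω is γ-Diophantine if |ω·ℓ| := |Σ_j ω_j ℓ_j| > γ ∏_{n∈ℤ}(1 + |ℓ_n|²⟨n⟩²)^{-1} for every finitely supported nonzero ℓ : ℤ → ℤ. -/

import Mathlib

open scoped ENNReal BigOperators Classical

noncomputable section

/-- Multi-indices: finitely supported functions `ℤ → ℕ`. -/
abbrev MIdx := ℤ →₀ ℕ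

/-- Total degree `|α| = Σ_j α_j`. -/
def deg (α : MIdx) : ℕ := ∑ j ∈ α.support, α j

/-- Momentum `π(α - β) = Σ_j j (α_j - β_j)`. -/
def mom (α β : MIdx) : ℤ :=
  ∑ j ∈ α.support ∪ β.support, j * ((α j : ℤ) - (β j : ℤ))

/-- `⟨j⟩ = max(|j|, 1)` as a real number. -/
def jb (j : ℤ) : ℝ := max |(j : ℝ)| 1

/-- The weight `u₀(r)_j = r ⟨j⟩^{-p} e^{-(a|j| + s ⟨j⟩^θ)}`. -/
def u0 (θ p a r s : ℝ) (j : ℤ) : ℝ :=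
  r * (jb j ^ p * Real.exp (a * |(j : ℝ)| + s * jb j ^ θ))⁻¹

/-- The coefficient weight `c^{(j)}_{r,s,η}(α,β) = u₀^{α+β-2e_j} e^{η |π(α-β)|}`. -/
def cwt (θ p a r s η : ℝ) (j : ℤ) (α β : MIdx) : ℝ :=
  (∏ i ∈ insert j (α.support ∪ β.support),
      u0 θ p a r s i ^ (((α i : ℤ) + (β i : ℤ)) - if i = j then 2 else 0)) *
    Real.exp (η * |(mom α β : ℝ)|)

/-- The majorant norm `|H|_{r,s,η} = sup_j Σ_{α,β} |H_{α,β}| β_j u₀^{α+β-2e_j} e^{η|π(α-β)|}`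
(with values in `ℝ≥0∞`). -/
def hnorm (θ p a r s η : ℝ) (H : MIdx → MIdx → ℂ) : ℝ≥0∞ :=
  ⨆ j : ℤ, ∑' q : MIdx × MIdx,
    ENNReal.ofReal (‖H q.1 q.2‖ * (q.2 j : ℝ) * cwt θ p a r s η j q.1 q.2)

/-- A family of coefficients is a Hamiltonian: mass conservation (`H_{α,β} = 0` unless
`|α| = |β|`) and the reality condition `H_{β,α} = conj (H_{α,β})`. -/
def IsHam (H : MIdx → MIdx → ℂ) : Prop :=
  (∀ α β : MIdx, deg α ≠ deg β → H α β = 0) ∧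
  (∀ α β : MIdx, H β α = (starRingEnd ℂ) (H α β))

/-- The set `D_γ` of `γ`-Diophantine frequencies. -/
def Dio (γ : ℝ) : Set (ℤ → ℝ) :=
  {ω | (∀ j : ℤ, |ω j - (j : ℝ) ^ 2| ≤ 1 / 2) ∧
    ∀ ℓ : ℤ →₀ ℤ, ℓ ≠ 0 →
      γ * ∏ n ∈ ℓ.support, (1 + (ℓ n : ℝ) ^ 2 * jb n ^ 2)⁻¹ <
        |∑ j ∈ ℓ.support, ω j * (ℓ j : ℝ)|}

/-- The sup distance `|ω - ω'|_∞` (with values in `ℝ≥0∞`). -/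
def dsup (ω ω' : ℤ → ℝ) : ℝ≥0∞ := ⨆ j : ℤ, ENNReal.ofReal |ω j - ω' j|

/-- The weighted Lipschitz norm
`‖H‖_{r,s,η} = sup_{ω ∈ D_γ} |H(ω)|_{r,s,η} + γ sup_{ω≠ω'} |H(ω)-H(ω')|_{r,s,η} / |ω-ω'|_∞`. -/
def hnormLip (γ θ p a r s η : ℝ) (H : (ℤ → ℝ) → MIdx → MIdx → ℂ) : ℝ≥0∞ :=
  (⨆ ω ∈ Dio γ, hnorm θ p a r s η (H ω)) +
    ENNReal.ofReal γ *
      ⨆ ω ∈ Dio γ, ⨆ ω' ∈ Dio γ,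
        hnorm θ p a r s η (fun α β => H ω α β - H ω' α β) / dsup ω ω'

open MeasureTheory

/-- `ω` is `γ`-Diophantine (small-divisor condition):
`|ω·ℓ| > γ ∏_n (1+|ℓ_n|²⟨n⟩²)^{-1}` for every finitely supported nonzero `ℓ`. -/
def IsDio (γ : ℝ) (ω : ℤ → ℝ) : Prop :=
  ∀ ℓ : ℤ →₀ ℤ, ℓ ≠ 0 →
    γ * ∏ n ∈ ℓ.support, (1 + (ℓ n : ℝ) ^ 2 * jb n ^ 2)⁻¹ <
      |∑ j ∈ ℓ.support, ω j * (ℓ j : ℝ)|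


section AuxMeasureEstimate

lemma jb_pos (j : ℤ) : 0 < jb j := lt_of_lt_of_le one_pos (le_max_right _ _)
lemma one_le_jb (j : ℤ) : 1 ≤ jb j := le_max_right _ _

lemma icc_succ (M : ℕ) : Finset.Icc (-((M:ℤ)+1)) ((M:ℤ)+1) =
    insert (-((M:ℤ)+1)) (insert (((M:ℤ)+1)) (Finset.Icc (-(M:ℤ)) M)) := by
  ext k; simp only [Finset.mem_Icc, Finset.mem_insert]; omega

lemma sum_inv_one_add_sq (a : ℝ) (ha : 1 ≤ a) (M : ℕ) :
    ∑ k ∈ Finset.Icc (-(M:ℤ)) (M:ℤ), (1 + (k:ℝ)^2 * a^2)⁻¹ ≤ 1 + 4/a^2 := by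
  have ha0 : (0:ℝ) < a := lt_of_lt_of_le one_pos ha
  have key : ∀ M : ℕ, ∑ k ∈ Finset.Icc (-(M:ℤ)) (M:ℤ), (1 + (k:ℝ)^2 * a^2)⁻¹
      ≤ 1 + (4/a^2) * (1 - 1/(M+1)) := by
    intro M
    induction M with
    | zero => simp
    | succ M ih =>
      have h1 : ((M:ℤ)+1 : ℤ) ∉ Finset.Icc (-(M:ℤ)) (M:ℤ) := by
        simp only [Finset.mem_Icc]; omega
      have h2 : (-((M:ℤ)+1) : ℤ) ∉ insert ((M:ℤ)+1) (Finset.Icc (-(M:ℤ)) (M:ℤ)) := by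
        simp only [Finset.mem_insert, Finset.mem_Icc]; omega
      have hM0 : (0:ℝ) ≤ (M:ℝ) := Nat.cast_nonneg M
      have hterm : (1 + ((M:ℝ)+1)^2 * a^2)⁻¹ ≤ (2/a^2) * (1/((M:ℝ)+1) - 1/((M:ℝ)+1+1)) := by
        have h3 : a^2 * (((M:ℝ)+1) * ((M:ℝ)+1+1)) / 2 ≤ 1 + ((M:ℝ)+1)^2 * a^2 := by
          nlinarith [mul_nonneg (mul_nonneg (sq_nonneg a) (by linarith : (0:ℝ) ≤ (M:ℝ)+1)) hM0]
        have h4 : (1 + ((M:ℝ)+1)^2 * a^2)⁻¹ ≤ (a^2 * (((M:ℝ)+1) * ((M:ℝ)+1+1)) / 2)⁻¹ :=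
          inv_anti₀ (by positivity) h3
        refine h4.trans (le_of_eq ?_)
        field_simp; ring
      have hnegterm : (1 + (-((M:ℝ)+1))^2 * a^2)⁻¹ = (1 + ((M:ℝ)+1)^2 * a^2)⁻¹ := by rw [neg_sq]
      push_cast
      rw [icc_succ M, Finset.sum_insert h2, Finset.sum_insert h1]
      push_cast
      rw [hnegterm]
      set S := ∑ x ∈ Finset.Icc (-(M:ℤ)) (M:ℤ), (1 + (x:ℝ)^2 * a^2)⁻¹ with hS
      set t := (1 + ((M:ℝ)+1)^2 * a^2)⁻¹ with ht
      ring_nf at hterm ih ⊢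
      linarith [hterm, ih]
  refine (key M).trans ?_
  have h6 : (4/a^2) * (1 - 1/((M:ℝ)+1)) ≤ 4/a^2 :=
    mul_le_of_le_one_right (by positivity) (by simp; positivity)
  linarith

lemma sum_jb_inv_sq (N : ℕ) :
    ∑ n ∈ Finset.Icc (-(N:ℤ)) (N:ℤ), (jb n ^ 2)⁻¹ ≤ 5 := by
  have key : ∀ N : ℕ, ∑ n ∈ Finset.Icc (-(N:ℤ)) (N:ℤ), (jb n ^ 2)⁻¹
      ≤ 1 + 4 * (1 - 1/(N+1)) := by
    intro N
    induction N with
    | zero => simp [jb]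
    | succ N ih =>
      have h1 : ((N:ℤ)+1 : ℤ) ∉ Finset.Icc (-(N:ℤ)) (N:ℤ) := by
        simp only [Finset.mem_Icc]; omega
      have h2 : (-((N:ℤ)+1) : ℤ) ∉ insert ((N:ℤ)+1) (Finset.Icc (-(N:ℤ)) (N:ℤ)) := by
        simp only [Finset.mem_insert, Finset.mem_Icc]; omega
      have hN0 : (0:ℝ) ≤ (N:ℝ) := Nat.cast_nonneg N
      have habs : |(((N:ℤ)+1 : ℤ) : ℝ)| = (N:ℝ)+1 := by
        push_cast; rw [abs_of_pos (by linarith)]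
      have hjb1 : jb ((N:ℤ)+1) = (N:ℝ)+1 := by
        unfold jb; rw [habs, max_eq_left (by linarith)]
      have hjb2 : jb (-((N:ℤ)+1)) = (N:ℝ)+1 := by
        unfold jb
        have : |((-((N:ℤ)+1) : ℤ) : ℝ)| = (N:ℝ)+1 := by
          push_cast; rw [abs_neg, abs_of_pos (by linarith)]
        rw [this, max_eq_left (by linarith)]
      have hterm : (((N:ℝ)+1)^2)⁻¹ ≤ 2 * (1/((N:ℝ)+1) - 1/((N:ℝ)+1+1)) := by
        have h7 : (1/((N:ℝ)+1) - 1/((N:ℝ)+1+1)) = 1/(((N:ℝ)+1)*((N:ℝ)+1+1)) := by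
          field_simp; ring
        rw [h7, mul_one_div, inv_eq_one_div,
          div_le_div_iff₀ (by positivity) (by positivity)]
        nlinarith
      push_cast
      rw [icc_succ N, Finset.sum_insert h2, Finset.sum_insert h1, hjb1, hjb2]
      set S := ∑ x ∈ Finset.Icc (-(N:ℤ)) (N:ℤ), (jb x ^ 2)⁻¹ with hS
      set u := (((N:ℝ)+1)^2)⁻¹ with hu
      ring_nf at hterm ih ⊢
      linarith [hterm, ih]
  refine (key N).trans ?_
  have h6 : (4:ℝ) * (1 - 1/((N:ℝ)+1)) ≤ 4 :=
    mul_le_of_le_one_right (by norm_num) (by simp; positivity)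
  linarith

lemma sum_P_le (F : Finset (ℤ →₀ ℤ)) :
    ∑ ℓ ∈ F, ∏ n ∈ ℓ.support, (1 + (ℓ n : ℝ)^2 * jb n^2)⁻¹ ≤ Real.exp 20 := by
  classical
  set T : Finset ℤ := F.sup Finsupp.support with hT
  set M : ℕ := F.sup (fun ℓ => ℓ.support.sup fun n => (ℓ n).natAbs) with hM
  have hsupp : ∀ ℓ ∈ F, ℓ.support ⊆ T := fun ℓ h => Finset.le_sup h
  have hval : ∀ ℓ ∈ F, ∀ n : ℤ, (ℓ n).natAbs ≤ M := by
    intro ℓ hℓ n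
    by_cases hn : n ∈ ℓ.support
    · exact le_trans (Finset.le_sup (f := fun n => (ℓ n).natAbs) hn)
        (Finset.le_sup (f := fun ℓ => ℓ.support.sup fun n => (ℓ n).natAbs) hℓ)
    · rw [Finsupp.notMem_support_iff.mp hn]; simp
  set h : ℤ → ℤ → ℝ := fun n k => (1 + (k : ℝ)^2 * jb n^2)⁻¹ with hh
  have hnn : ∀ n k, 0 ≤ h n k := fun n k => by
    have := jb_pos n; rw [hh]; positivity
  have hA : ∀ ℓ ∈ F, ∏ n ∈ ℓ.support, (1 + (ℓ n : ℝ)^2 * jb n^2)⁻¹ = ∏ n ∈ T, h n (ℓ n) :=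
    fun ℓ hℓ => Finset.prod_subset (hsupp ℓ hℓ) (fun n _ hns => by
      simp [Finsupp.notMem_support_iff.mp hns])
  have hB : ∑ ℓ ∈ F, ∏ n ∈ T, h n (ℓ n)
      ≤ ∏ n ∈ T, ∑ k ∈ Finset.Icc (-(M:ℤ)) (M:ℤ), h n k := by
    rw [Finset.prod_sum]
    have hemb : ∀ ℓ ∈ F, (fun (a : ℤ) (_ : a ∈ T) => ℓ a)
        ∈ T.pi (fun _ => Finset.Icc (-(M:ℤ)) (M:ℤ)) := by
      intro ℓ hℓ
      rw [Finset.mem_pi]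
      intro a _
      have := hval ℓ hℓ a
      simp only [Finset.mem_Icc]; omega
    have hinj : ∀ ℓ ∈ F, ∀ ℓ' ∈ F,
        (fun (a : ℤ) (_ : a ∈ T) => ℓ a) = (fun (a : ℤ) (_ : a ∈ T) => ℓ' a) → ℓ = ℓ' := by
      intro ℓ hℓ ℓ' hℓ' he
      ext n
      by_cases hn : n ∈ T
      · exact congrFun (congrFun he n) hn
      · rw [Finsupp.notMem_support_iff.mp (fun hmem => hn (hsupp ℓ hℓ hmem)),
          Finsupp.notMem_support_iff.mp (fun hmem => hn (hsupp ℓ' hℓ' hmem))]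
    calc ∑ ℓ ∈ F, ∏ n ∈ T, h n (ℓ n)
        = ∑ ℓ ∈ F, ∏ x ∈ T.attach, h x.1 (ℓ x.1) := by
          refine Finset.sum_congr rfl (fun ℓ _ => ?_)
          rw [Finset.prod_attach T (fun n => h n (ℓ n))]
      _ = ∑ p ∈ F.image (fun ℓ (a : ℤ) (_ : a ∈ T) => ℓ a),
            ∏ x ∈ T.attach, h x.1 (p x.1 x.2) :=
          (Finset.sum_image (f := fun (p : (a : ℤ) → a ∈ T → ℤ) =>
            ∏ x ∈ T.attach, h x.1 (p x.1 x.2)) hinj).symm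
      _ ≤ ∑ p ∈ T.pi (fun _ => Finset.Icc (-(M:ℤ)) (M:ℤ)),
            ∏ x ∈ T.attach, h x.1 (p x.1 x.2) :=
          Finset.sum_le_sum_of_subset_of_nonneg
            (Finset.image_subset_iff.mpr hemb)
            (fun p _ _ => Finset.prod_nonneg fun x _ => hnn _ _)
  have hD : ∀ n ∈ T, ∑ k ∈ Finset.Icc (-(M:ℤ)) (M:ℤ), h n k
      ≤ Real.exp (4 * (jb n ^ 2)⁻¹) := by
    intro n _
    refine le_trans (sum_inv_one_add_sq (jb n) (one_le_jb n) M) ?_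
    have he := Real.add_one_le_exp (4 * (jb n ^ 2)⁻¹)
    have h48 : (4:ℝ)/(jb n)^2 = 4 * (jb n ^ 2)⁻¹ := by rw [div_eq_mul_inv]
    linarith
  have hE : ∏ n ∈ T, ∑ k ∈ Finset.Icc (-(M:ℤ)) (M:ℤ), h n k
      ≤ Real.exp (∑ n ∈ T, 4 * (jb n ^ 2)⁻¹) := by
    rw [Real.exp_sum]
    exact Finset.prod_le_prod (fun n _ => Finset.sum_nonneg fun k _ => hnn n k) hD
  set N : ℕ := T.sup Int.natAbs with hN
  have hTsub : T ⊆ Finset.Icc (-(N:ℤ)) (N:ℤ) := by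
    intro n hn
    have := Finset.le_sup (f := Int.natAbs) hn
    simp only [Finset.mem_Icc]; omega
  have hF : ∑ n ∈ T, 4 * (jb n ^ 2)⁻¹ ≤ 20 := by
    have h1 : ∑ n ∈ T, (jb n ^ 2)⁻¹ ≤ ∑ n ∈ Finset.Icc (-(N:ℤ)) (N:ℤ), (jb n ^ 2)⁻¹ :=
      Finset.sum_le_sum_of_subset_of_nonneg hTsub (fun n _ _ => by positivity)
    have h2 := sum_jb_inv_sq N
    rw [← Finset.mul_sum]
    linarith
  calc ∑ ℓ ∈ F, ∏ n ∈ ℓ.support, (1 + (ℓ n : ℝ)^2 * jb n^2)⁻¹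
      = ∑ ℓ ∈ F, ∏ n ∈ T, h n (ℓ n) := Finset.sum_congr rfl hA
    _ ≤ ∏ n ∈ T, ∑ k ∈ Finset.Icc (-(M:ℤ)) (M:ℤ), h n k := hB
    _ ≤ Real.exp (∑ n ∈ T, 4 * (jb n ^ 2)⁻¹) := hE
    _ ≤ Real.exp 20 := Real.exp_le_exp.mpr hF


/-- the uniform measure on [-1/2,1/2] -/
noncomputable def unif : Measure ℝ := volume.restrict (Set.Icc (-(1:ℝ)/2) (1/2))

instance : IsProbabilityMeasure unif := by
  constructor
  rw [unif, Measure.restrict_apply_univ, Real.volume_Icc]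
  norm_num

lemma slice_bound (b c ε : ℝ) (hc : 1 ≤ |c|) (hε : 0 ≤ ε) :
    unif {t : ℝ | |b + t * c| ≤ ε} ≤ ENNReal.ofReal (2 * ε) := by
  have hc0 : c ≠ 0 := by
    intro h; rw [h] at hc; simp at hc; linarith
  have hcpos : (0:ℝ) < |c| := lt_of_lt_of_le one_pos hc
  have hsub : {t : ℝ | |b + t * c| ≤ ε} ⊆
      Set.Icc (-b/c - ε/|c|) (-b/c + ε/|c|) := by
    intro t ht
    simp only [Set.mem_setOf_eq] at ht
    have h1 : |t - (-b/c)| ≤ ε/|c| := by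
      have h2 : t - (-b/c) = (b + t*c)/c := by field_simp; ring
      rw [h2, abs_div]
      gcongr
    rw [abs_sub_le_iff] at h1
    constructor <;> [linarith [h1.2]; linarith [h1.1]]
  calc unif {t : ℝ | |b + t * c| ≤ ε}
      ≤ volume (Set.Icc (-b/c - ε/|c|) (-b/c + ε/|c|)) :=
        le_trans (measure_mono hsub) (Measure.restrict_le_self _)
    _ = ENNReal.ofReal (2 * (ε/|c|)) := by rw [Real.volume_Icc]; ring_nf
    _ ≤ ENNReal.ofReal (2 * ε) := by
        apply ENNReal.ofReal_le_ofReal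
        have : ε/|c| ≤ ε := by
          rw [div_le_iff₀ hcpos]
          nlinarith
        linarith

lemma measurable_linsum {ι : Type*} [Fintype ι] (d c : ι → ℝ) :
    Measurable (fun x : ι → ℝ => ∑ i, (d i + x i) * c i) :=
  Finset.measurable_sum _ (fun i _ =>
    ((measurable_const.add (measurable_pi_apply i)).mul measurable_const))

lemma pi_linear_bound {ι : Type*} [Fintype ι] (d c : ι → ℝ) (i₀ : ι)
    (hc : 1 ≤ |c i₀|) (ε : ℝ) (hε : 0 ≤ ε) :
    (Measure.pi fun _ : ι => unif) {x | |∑ i, (d i + x i) * c i| ≤ ε}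
      ≤ ENNReal.ofReal (2 * ε) := by
  classical
  set p : ι → Prop := fun i => i ≠ i₀ with hp
  haveI : Unique {i // ¬ p i} :=
    ⟨⟨⟨i₀, by simp [hp]⟩⟩, fun a => Subtype.ext (by simpa [hp] using a.2)⟩
  have hdef : ((default : {i // ¬ p i}) : ι) = i₀ :=
    not_not.mp (default : {i // ¬ p i}).2
  set G : ((Π i : {i // p i}, ℝ) × (Π i : {i // ¬ p i}, ℝ)) → ℝ :=
    fun q => (∑ i : {i // p i}, (d i + q.1 i) * c i) +
      (∑ i : {i // ¬ p i}, (d i + q.2 i) * c i) with hG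
  have hGm : Measurable G := by
    apply Measurable.add
    · exact Finset.measurable_sum _ (fun i _ =>
        ((measurable_const.add ((measurable_pi_apply i).comp measurable_fst)).mul
          measurable_const))
    · exact Finset.measurable_sum _ (fun i _ =>
        ((measurable_const.add ((measurable_pi_apply i).comp measurable_snd)).mul
          measurable_const))
  have hBs' : MeasurableSet {q | |G q| ≤ ε} := measurableSet_le hGm.abs measurable_const
  have hmp := measurePreserving_piEquivPiSubtypeProd (fun _ : ι => unif) p
  have hpre : (MeasurableEquiv.piEquivPiSubtypeProd (fun _ : ι => ℝ) p) ⁻¹' {q | |G q| ≤ ε}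
      = {x : ι → ℝ | |∑ i, (d i + x i) * c i| ≤ ε} := by
    ext x
    simp only [Set.mem_preimage, Set.mem_setOf_eq, MeasurableEquiv.piEquivPiSubtypeProd,
      Equiv.piEquivPiSubtypeProd, MeasurableEquiv.coe_mk, Equiv.coe_fn_mk, hG]
    rw [Fintype.sum_subtype_add_sum_subtype p (fun i => (d i + x i) * c i)]
  have hmeq : (Measure.pi fun _ : ι => unif) {x : ι → ℝ | |∑ i, (d i + x i) * c i| ≤ ε}
      = ((Measure.pi fun _ : {i // p i} => unif).prod
          (Measure.pi fun _ : {i // ¬ p i} => unif)) {q | |G q| ≤ ε} := by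
    rw [← hpre]
    exact hmp.measure_preimage hBs'.nullMeasurableSet
  rw [hmeq, Measure.prod_apply hBs']
  have hslice : ∀ y : Π i : {i // p i}, ℝ,
      (Measure.pi fun _ : {i // ¬ p i} => unif) (Prod.mk y ⁻¹' {q | |G q| ≤ ε})
        ≤ ENNReal.ofReal (2 * ε) := by
    intro y
    set b : ℝ := (∑ i : {i // p i}, (d i + y i) * c i) + d i₀ * c i₀ with hb
    have hsliceq : (Prod.mk y ⁻¹' {q | |G q| ≤ ε}) =
        (MeasurableEquiv.funUnique {i // ¬ p i} ℝ) ⁻¹' {t : ℝ | |b + t * c i₀| ≤ ε} := by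
      ext z
      have hfu : (MeasurableEquiv.funUnique {i // ¬ p i} ℝ) z = z default := by
        simp [MeasurableEquiv.funUnique, Equiv.funUnique]
      simp only [Set.mem_preimage, Set.mem_setOf_eq, hG, hfu]
      rw [Fintype.sum_unique (fun i : {i // ¬ p i} => (d i + z i) * c i), hdef]
      have heq : (∑ i : {i // p i}, (d i + y i) * c i) + (d i₀ + z default) * c i₀
          = b + z default * c i₀ := by rw [hb]; ring
      rw [heq]
    have hTm : MeasurableSet {t : ℝ | |b + t * c i₀| ≤ ε} := by
      have hm : Measurable fun t : ℝ => |b + t * c i₀| := by fun_prop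
      exact measurableSet_le hm measurable_const
    rw [hsliceq]
    have hmeas := (measurePreserving_funUnique unif {i // ¬ p i}).measure_preimage
      hTm.nullMeasurableSet
    refine le_trans (le_of_eq ?_) (slice_bound b (c i₀) ε hc hε)
    convert hmeas using 3
  calc ∫⁻ y, (Measure.pi fun _ : {i // ¬ p i} => unif) (Prod.mk y ⁻¹' {q | |G q| ≤ ε})
        ∂(Measure.pi fun _ : {i // p i} => unif)
      ≤ ∫⁻ _, ENNReal.ofReal (2 * ε) ∂(Measure.pi fun _ : {i // p i} => unif) :=
        lintegral_mono hslice
    _ = ENNReal.ofReal (2 * ε) := by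
        rw [lintegral_const, measure_univ, mul_one]

lemma map_restrict_eq_pi (μ : Measure (ℤ → ℝ))
    (hμ : ∀ (S : Finset ℤ) (A : ℤ → Set ℝ), (∀ j, MeasurableSet (A j)) →
      μ {ξ | ∀ j ∈ S, ξ j ∈ A j} = ∏ j ∈ S, volume (A j ∩ Set.Icc (-(1:ℝ)/2) (1/2)))
    (S : Finset ℤ) :
    μ.map (fun ξ (i : ↥S) => ξ (i : ℤ)) = Measure.pi (fun _ : ↥S => unif) := by
  classical
  have hres : Measurable (fun ξ : ℤ → ℝ => fun i : ↥S => ξ (i : ℤ)) :=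
    measurable_pi_lambda _ (fun i => measurable_pi_apply _)
  refine (Measure.pi_eq fun s hs => ?_).symm
  rw [Measure.map_apply hres (MeasurableSet.univ_pi hs)]
  set A : ℤ → Set ℝ := fun j => if h : j ∈ S then s ⟨j, h⟩ else Set.univ with hA
  have hAm : ∀ j, MeasurableSet (A j) := by
    intro j
    by_cases h : j ∈ S
    · simp only [hA, dif_pos h]; exact hs _
    · simp only [hA, dif_neg h]; exact MeasurableSet.univ
  have hpre : (fun ξ : ℤ → ℝ => fun i : ↥S => ξ (i : ℤ)) ⁻¹' (Set.univ.pi s)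
      = {ξ | ∀ j ∈ S, ξ j ∈ A j} := by
    ext ξ
    simp only [Set.mem_preimage, Set.mem_pi, Set.mem_univ, forall_true_left,
      Set.mem_setOf_eq, true_implies]
    constructor
    · intro h j hj
      simp only [hA, dif_pos hj]
      exact h ⟨j, hj⟩
    · intro h i
      have := h (i : ℤ) i.2
      simpa only [hA, dif_pos i.2, Subtype.coe_eta] using this
  rw [hpre, hμ S A hAm,
    ← Finset.prod_coe_sort S (fun j => volume (A j ∩ Set.Icc (-(1:ℝ)/2) (1/2)))]
  refine Finset.prod_congr rfl (fun i _ => ?_)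
  rw [unif, Measure.restrict_apply' measurableSet_Icc]
  congr 1
  simp only [hA, dif_pos i.2, Subtype.coe_eta]


lemma one_le_abs_cast {k : ℤ} (hk : k ≠ 0) : (1:ℝ) ≤ |(k : ℝ)| := by
  have h1 : (1:ℤ) ≤ |k| := by
    rcases hk.lt_or_gt with h | h
    · rw [abs_of_neg h]; omega
    · rw [abs_of_pos h]; omega
  calc (1:ℝ) = ((1:ℤ):ℝ) := by norm_num
    _ ≤ ((|k|:ℤ):ℝ) := by exact_mod_cast h1
    _ = |(k:ℝ)| := by push_cast; rfl

end AuxMeasureEstimate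

/-- measure estimate `\eqref{misura}`: there is `C > 0` such that for every
`γ ∈ (0,1)` and every probability measure `μ` on `ℝ^ℤ` which is the product of the uniform
probability measures on `[-1/2, 1/2]` (characterized through its finite-dimensional cylinder
marginals), the set of `ξ` for which `ω(ξ) = (j² + ξ_j)_j` is not `γ`-Diophantine has
`μ`-measure at most `Cγ`. -/

theorem diophantine_measure_estimate :
    ∃ C : ℝ, 0 < C ∧
      ∀ γ : ℝ, 0 < γ → γ < 1 →
      ∀ μ : Measure (ℤ → ℝ), IsProbabilityMeasure μ →
        (∀ (S : Finset ℤ) (A : ℤ → Set ℝ), (∀ j, MeasurableSet (A j)) →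
          μ {ξ | ∀ j ∈ S, ξ j ∈ A j} =
            ∏ j ∈ S, volume (A j ∩ Set.Icc (-(1 : ℝ) / 2) (1 / 2))) →
        μ {ξ | ¬ IsDio γ (fun j => (j : ℝ) ^ 2 + ξ j)} ≤ ENNReal.ofReal (C * γ) := by
  classical
  refine ⟨2 * Real.exp 20, by positivity, ?_⟩
  intro γ hγ0 hγ1 μ hμprob hμcyl
  set P : (ℤ →₀ ℤ) → ℝ := fun ℓ => ∏ n ∈ ℓ.support, (1 + (ℓ n : ℝ) ^ 2 * jb n ^ 2)⁻¹ with hP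
  have hPnn : ∀ ℓ, 0 ≤ P ℓ := fun ℓ => Finset.prod_nonneg fun n _ => by
    have := jb_pos n; positivity
  set B : (ℤ →₀ ℤ) → Set (ℤ → ℝ) := fun ℓ =>
    {ξ | |∑ j ∈ ℓ.support, ((j : ℝ) ^ 2 + ξ j) * (ℓ j : ℝ)| ≤ γ * P ℓ} with hB
  have hsub : {ξ : ℤ → ℝ | ¬ IsDio γ (fun j => (j : ℝ) ^ 2 + ξ j)} ⊆
      ⋃ u : {ℓ : ℤ →₀ ℤ // ℓ ≠ 0}, B u.1 := by
    intro ξ hξ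
    simp only [Set.mem_setOf_eq, IsDio] at hξ
    push_neg at hξ
    obtain ⟨ℓ, hℓ0, hle⟩ := hξ
    exact Set.mem_iUnion.mpr ⟨⟨ℓ, hℓ0⟩, by simpa [hB, hP] using hle⟩
  have hBbound : ∀ (ℓ : ℤ →₀ ℤ), ℓ ≠ 0 → μ (B ℓ) ≤ ENNReal.ofReal (2 * (γ * P ℓ)) := by
    intro ℓ hℓ0
    obtain ⟨j₀, hj₀⟩ := Finsupp.support_nonempty_iff.mpr hℓ0
    set S := ℓ.support with hS
    set res := fun (ξ : ℤ → ℝ) (i : ↥S) => ξ (i : ℤ) with hres'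
    have hres : Measurable res := measurable_pi_lambda _ fun i => measurable_pi_apply _
    set Bs : Set (↥S → ℝ) :=
      {x | |∑ i : ↥S, (((i : ℤ) : ℝ) ^ 2 + x i) * (ℓ (i : ℤ) : ℝ)| ≤ γ * P ℓ} with hBs
    have hBsm : MeasurableSet Bs := by
      have hm : Measurable fun x : ↥S → ℝ =>
          ∑ i : ↥S, (((i : ℤ) : ℝ) ^ 2 + x i) * (ℓ (i : ℤ) : ℝ) :=
        measurable_linsum _ _
      exact measurableSet_le hm.abs measurable_const
    have hBeq : B ℓ = res ⁻¹' Bs := by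
      ext ξ
      simp only [hB, Set.mem_setOf_eq, Set.mem_preimage, hBs, hres']
      rw [Finset.sum_coe_sort S (fun j => ((j : ℝ) ^ 2 + ξ j) * (ℓ j : ℝ))]
    have hγP : 0 ≤ γ * P ℓ := mul_nonneg hγ0.le (hPnn ℓ)
    calc μ (B ℓ) = (μ.map res) Bs := by
          rw [hBeq, Measure.map_apply hres hBsm]
      _ = (Measure.pi fun _ : ↥S => unif) Bs := by
          rw [hres', map_restrict_eq_pi μ hμcyl S]
      _ ≤ ENNReal.ofReal (2 * (γ * P ℓ)) := by
          refine pi_linear_bound (fun i : ↥S => ((i : ℤ) : ℝ) ^ 2)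
            (fun i : ↥S => (ℓ (i : ℤ) : ℝ)) ⟨j₀, hj₀⟩ ?_ _ hγP
          exact one_le_abs_cast (Finsupp.mem_support_iff.mp hj₀)
  calc μ {ξ | ¬ IsDio γ (fun j => (j : ℝ) ^ 2 + ξ j)}
      ≤ μ (⋃ u : {ℓ : ℤ →₀ ℤ // ℓ ≠ 0}, B u.1) := measure_mono hsub
    _ ≤ ∑' u : {ℓ : ℤ →₀ ℤ // ℓ ≠ 0}, μ (B u.1) := measure_iUnion_le _
    _ ≤ ∑' u : {ℓ : ℤ →₀ ℤ // ℓ ≠ 0},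
          ENNReal.ofReal (2 * γ) * ENNReal.ofReal (P u.1) := by
        refine ENNReal.tsum_le_tsum fun u => ?_
        refine le_trans (hBbound u.1 u.2) (le_of_eq ?_)
        rw [show 2 * (γ * P u.1) = (2 * γ) * P u.1 from by ring,
          ENNReal.ofReal_mul (by positivity)]
    _ = ENNReal.ofReal (2 * γ) *
          ∑' u : {ℓ : ℤ →₀ ℤ // ℓ ≠ 0}, ENNReal.ofReal (P u.1) := ENNReal.tsum_mul_left
    _ ≤ ENNReal.ofReal (2 * γ) * ENNReal.ofReal (Real.exp 20) := by
        refine mul_le_mul_right ?_ _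
        rw [ENNReal.tsum_eq_iSup_sum]
        refine iSup_le fun Fs => ?_
        rw [← ENNReal.ofReal_sum_of_nonneg (fun u _ => hPnn u.1)]
        apply ENNReal.ofReal_le_ofReal
        have hkey := sum_P_le (Fs.image Subtype.val)
        rw [Finset.sum_image (fun x _ y _ hxy => Subtype.ext hxy)] at hkey
        simpa [hP] using hkey
    _ = ENNReal.ofReal (2 * Real.exp 20 * γ) := by
        rw [← ENNReal.ofReal_mul (by positivity)]
        ring_nf


end
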